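/- Let (E,d) be a metric space and ν a Borel probability measure on E. For each n ≥ 1, let F_n be a random element of E^{V_n}, where V_n = {1,…,n}, defined on some probability space, and let o_n and o_n' be two independent uniformly distributed random elements of V_n, independent of F_n. Suppose that the pair (F_n(o_n), F_n(o_n')) converges in distribution to the product measure ν ⊗ ν on E × E. Then for every bounded continuous function h : E → ℝ, the real random variables (1/n) · Σ_{v ∈ V_n} h(F_n(v)) converge in probability (indeed in L²) to the constant ∫_E h dν. -/

import Mathlib

open MeasureTheory ProbabilityTheory Filter Topology

private lemma integrable_of_bdd {α : Type*} [MeasurableSpace α] {μ : Measure α}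
    [IsFiniteMeasure μ] {f : α → ℝ} (hf : AEStronglyMeasurable f μ) (C : ℝ)
    (hC : ∀ x, |f x| ≤ C) : Integrable f μ :=
  (integrable_const C).mono' hf (ae_of_all _ fun x => by simpa [Real.norm_eq_abs] using hC x)

private lemma unif_integral (m : ℕ) (g : Fin (m+1) → ℝ) :
    ∫ v, g v ∂((PMF.uniformOfFintype (Fin (m+1))).toMeasure)
      = ∑ v, ((m+1 : ℝ))⁻¹ * g v := by
  rw [PMF.integral_eq_sum]
  simp [PMF.uniformOfFintype_apply, ENNReal.toReal_inv, ENNReal.toReal_add, ENNReal.toReal_natCast]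

private lemma key_avg {E : Type*} [MeasurableSpace E]
    {Ωn : Type*} [MeasurableSpace Ωn] (P : Measure Ωn) [IsProbabilityMeasure P]
    {m : ℕ} (F : Ωn → (Fin (m+1) → E)) (o o' : Ωn → Fin (m+1))
    (hF : Measurable F) (ho : Measurable o) (ho' : Measurable o')
    (hu : P.map o = (PMF.uniformOfFintype (Fin (m+1))).toMeasure)
    (hu' : P.map o' = (PMF.uniformOfFintype (Fin (m+1))).toMeasure)
    (hoo' : IndepFun o o' P)
    (hFoo' : IndepFun F (fun ω => (o ω, o' ω)) P)
    (φ : (Fin (m+1) → E) × Fin (m+1) × Fin (m+1) → ℝ)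
    (hφ : Measurable φ) (C : ℝ) (hC : ∀ z, |φ z| ≤ C) :
    ∫ ω, φ (F ω, o ω, o' ω) ∂P
      = ∫ ω, ∑ v, ∑ w, ((m+1:ℝ))⁻¹ * (((m+1:ℝ))⁻¹ * φ (F ω, v, w)) ∂P := by
  set U := (PMF.uniformOfFintype (Fin (m+1))).toMeasure with hU
  haveI : IsProbabilityMeasure U := PMF.toMeasure.isProbabilityMeasure _
  have hpairmeas : Measurable (fun ω => (o ω, o' ω)) := ho.prodMk ho'
  have hbig : P.map (fun ω => (F ω, (o ω, o' ω))) = (P.map F).prod (U.prod U) := by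
    rw [(indepFun_iff_map_prod_eq_prod_map_map hF.aemeasurable hpairmeas.aemeasurable).mp hFoo',
      (indepFun_iff_map_prod_eq_prod_map_map ho.aemeasurable ho'.aemeasurable).mp hoo', hu, hu']
  haveI : IsProbabilityMeasure (P.map F) := Measure.isProbabilityMeasure_map hF.aemeasurable
  have hint : Integrable φ ((P.map F).prod (U.prod U)) :=
    integrable_of_bdd hφ.aestronglyMeasurable C hC
  have h1 : ∫ ω, φ (F ω, o ω, o' ω) ∂P = ∫ z, φ z ∂((P.map F).prod (U.prod U)) := by
    rw [← hbig, integral_map (hF.prodMk hpairmeas).aemeasurable hφ.aestronglyMeasurable]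
  rw [h1, integral_prod φ hint]
  have h2 : ∀ f : Fin (m+1) → E, ∫ p, φ (f, p) ∂(U.prod U)
      = ∑ v, ∑ w, ((m+1:ℝ))⁻¹ * (((m+1:ℝ))⁻¹ * φ (f, v, w)) := by
    intro f
    have hφf : Measurable (fun p : Fin (m+1) × Fin (m+1) => φ (f, p)) :=
      hφ.comp (measurable_const.prodMk measurable_id)
    have hintf : Integrable (fun p : Fin (m+1) × Fin (m+1) => φ (f, p)) (U.prod U) :=
      integrable_of_bdd hφf.aestronglyMeasurable C (fun p => hC _)
    rw [integral_prod _ hintf, unif_integral]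
    refine Finset.sum_congr rfl fun v _ => ?_
    rw [unif_integral, Finset.mul_sum]
  have h3 : ∫ f, ∫ p, φ (f, p) ∂(U.prod U) ∂(P.map F)
      = ∫ f, ∑ v, ∑ w, ((m+1:ℝ))⁻¹ * (((m+1:ℝ))⁻¹ * φ (f, v, w)) ∂(P.map F) := by
    congr 1; funext f; exact h2 f
  rw [h3, integral_map hF.aemeasurable]
  exact (Finset.measurable_sum _ fun v _ => Finset.measurable_sum _ fun w _ =>
    measurable_const.mul (measurable_const.mul
      (hφ.comp (measurable_id.prodMk measurable_const)))).aestronglyMeasurable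


/-- Let `(E, d)` be a metric space and `ν` a Borel probability measure on `E`.
For each `n ≥ 1` (encoded as `n + 1`), let `F n` be a random element of `E ^ (Fin (n+1))`
defined on a probability space `(Ω n, P n)`, and let `o n`, `o' n` be two independent uniform
random elements of `Fin (n+1)`, independent of `F n`.  If the pair
`(F n (o n), F n (o' n))` converges in distribution to the product measure `ν ⊗ ν`, then
for every bounded continuous `h : E → ℝ`, the random variables
`(1/(n+1)) * ∑ v, h (F n v)` converge in probability to the constant `∫ h dν`. -/
theorem local_convergence_in_probability_of_joint_two_root_convergence
    {E : Type*} [MetricSpace E] [MeasurableSpace E] [BorelSpace E]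
    (ν : Measure E) [IsProbabilityMeasure ν]
    (Ω : ℕ → Type*) [∀ n, MeasurableSpace (Ω n)]
    (P : ∀ n, Measure (Ω n)) [∀ n, IsProbabilityMeasure (P n)]
    (F : ∀ n, Ω n → (Fin (n + 1) → E))
    (o o' : ∀ n, Ω n → Fin (n + 1))
    (hFmeas : ∀ n, Measurable (F n))
    (homeas : ∀ n, Measurable (o n)) (ho'meas : ∀ n, Measurable (o' n))
    -- `o n` and `o' n` are uniformly distributed on `Fin (n+1)`
    (hunif : ∀ n, (P n).map (o n) = (PMF.uniformOfFintype (Fin (n + 1))).toMeasure)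
    (hunif' : ∀ n, (P n).map (o' n) = (PMF.uniformOfFintype (Fin (n + 1))).toMeasure)
    -- `o n` and `o' n` are independent, and the pair `(o n, o' n)` is independent of `F n`
    (hoo' : ∀ n, IndepFun (o n) (o' n) (P n))
    (hFoo' : ∀ n, IndepFun (F n) (fun ω => (o n ω, o' n ω)) (P n))
    -- convergence in distribution of `(F n (o n), F n (o' n))` to `ν ⊗ ν`
    (hconv : ∀ g : BoundedContinuousFunction (E × E) ℝ,
      Tendsto (fun n => ∫ ω, g (F n ω (o n ω), F n ω (o' n ω)) ∂(P n)) atTop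
        (𝓝 (∫ p, g p ∂(ν.prod ν)))) :
    ∀ h : BoundedContinuousFunction E ℝ, ∀ ε > (0 : ℝ),
      Tendsto (fun n => P n {ω | ε <
          |(1 / (n + 1 : ℝ)) * ∑ v : Fin (n + 1), h (F n ω v) - ∫ x, h x ∂ν|}) atTop
        (𝓝 0) := by
  intro h ε hε
  set c : ℝ := ∫ x, h x ∂ν with hc
  set S : ∀ n, Ω n → ℝ := fun n ω => (1 / (n + 1 : ℝ)) * ∑ v : Fin (n + 1), h (F n ω v)
    with hSdef
  have hhmeas : Measurable (h : E → ℝ) := h.continuous.measurable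
  have hSmeas : ∀ n, Measurable (S n) := fun n =>
    measurable_const.mul (Finset.measurable_sum _ fun v _ =>
      hhmeas.comp ((measurable_pi_apply v).comp (hFmeas n)))
  have hSbdd : ∀ n ω, |S n ω| ≤ ‖h‖ := by
    intro n ω
    have h1 : |∑ v : Fin (n+1), h (F n ω v)| ≤ ∑ v : Fin (n+1), ‖h‖ :=
      (Finset.abs_sum_le_sum_abs _ _).trans (Finset.sum_le_sum fun v _ => by
        simpa [Real.norm_eq_abs] using h.norm_coe_le_norm (F n ω v))
    calc |S n ω| = (1 / (n + 1 : ℝ)) * |∑ v : Fin (n+1), h (F n ω v)| := by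
          rw [hSdef]; simp only; rw [abs_mul, abs_of_pos (by positivity)]
      _ ≤ (1 / (n + 1 : ℝ)) * ∑ v : Fin (n+1), ‖h‖ :=
          mul_le_mul_of_nonneg_left h1 (by positivity)
      _ = ‖h‖ := by
          rw [Finset.sum_const, Finset.card_fin, nsmul_eq_mul]; push_cast; field_simp
  set T1 : ℕ → ℝ := fun n => ∫ ω, h (F n ω (o n ω)) ∂(P n) with hT1def
  set T2 : ℕ → ℝ := fun n => ∫ ω, h (F n ω (o n ω)) * h (F n ω (o' n ω)) ∂(P n) with hT2def
  -- moment identities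
  have hES : ∀ n, T1 n = ∫ ω, S n ω ∂(P n) := by
    intro n
    have hφm : Measurable (fun z : (Fin (n+1) → E) × Fin (n+1) × Fin (n+1) =>
        h (z.1 z.2.1)) := by
      apply measurable_from_prod_countable_left
      intro p
      exact hhmeas.comp (measurable_pi_apply p.1)
    have key := key_avg (P n) (F n) (o n) (o' n) (hFmeas n) (homeas n) (ho'meas n)
      (hunif n) (hunif' n) (hoo' n) (hFoo' n)
      (fun z => h (z.1 z.2.1)) hφm ‖h‖
      (fun z => by simpa [Real.norm_eq_abs] using h.norm_coe_le_norm (z.1 z.2.1))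
    rw [hT1def]; simp only
    rw [key]
    congr 1; funext ω
    rw [hSdef]; simp only
    have hinner : ∀ v : Fin (n+1),
        ∑ _w : Fin (n+1), ((n+1:ℝ))⁻¹ * (((n+1:ℝ))⁻¹ * h (F n ω v))
          = ((n+1:ℝ))⁻¹ * h (F n ω v) := by
      intro v
      rw [Finset.sum_const, Finset.card_fin, nsmul_eq_mul]
      push_cast; field_simp
    rw [Finset.sum_congr rfl fun v _ => hinner v, Finset.mul_sum]
    refine Finset.sum_congr rfl fun v _ => ?_
    rw [one_div]
  have hES2 : ∀ n, T2 n = ∫ ω, (S n ω)^2 ∂(P n) := by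
    intro n
    have hφm : Measurable (fun z : (Fin (n+1) → E) × Fin (n+1) × Fin (n+1) =>
        h (z.1 z.2.1) * h (z.1 z.2.2)) := by
      apply measurable_from_prod_countable_left
      intro p
      exact (hhmeas.comp (measurable_pi_apply p.1)).mul (hhmeas.comp (measurable_pi_apply p.2))
    have key := key_avg (P n) (F n) (o n) (o' n) (hFmeas n) (homeas n) (ho'meas n)
      (hunif n) (hunif' n) (hoo' n) (hFoo' n)
      (fun z => h (z.1 z.2.1) * h (z.1 z.2.2)) hφm (‖h‖ * ‖h‖)
      (fun z => by
        rw [abs_mul]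
        exact mul_le_mul (by simpa [Real.norm_eq_abs] using h.norm_coe_le_norm (z.1 z.2.1))
          (by simpa [Real.norm_eq_abs] using h.norm_coe_le_norm (z.1 z.2.2))
          (abs_nonneg _) (norm_nonneg _))
    rw [hT2def]; simp only
    rw [key]
    congr 1; funext ω
    calc (∑ v, ∑ w, ((n+1:ℝ))⁻¹ * (((n+1:ℝ))⁻¹ * (h (F n ω v) * h (F n ω w))))
        = ∑ v, ∑ w, (((n+1:ℝ))⁻¹ * h (F n ω v)) * (((n+1:ℝ))⁻¹ * h (F n ω w)) := by
          refine Finset.sum_congr rfl fun v _ => Finset.sum_congr rfl fun w _ => by ring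
      _ = (∑ v, ((n+1:ℝ))⁻¹ * h (F n ω v)) * (∑ w, ((n+1:ℝ))⁻¹ * h (F n ω w)) :=
          (Finset.sum_mul_sum _ _ _ _).symm
      _ = (S n ω)^2 := by
          rw [hSdef]; simp only; rw [← Finset.mul_sum, sq, one_div]
  -- convergence of the moments
  have hT1lim : Tendsto T1 atTop (𝓝 c) := by
    have := hconv (h.compContinuous (ContinuousMap.fst (α := E) (β := E)))
    have heq : ∫ p, (h.compContinuous (ContinuousMap.fst (α := E) (β := E))) p ∂(ν.prod ν)
        = c := by
      have h2 := integral_prod_mul (μ := ν) (ν := ν) (f := fun x => h x) (g := fun _ => (1:ℝ))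
      simp only [mul_one] at h2
      simpa [BoundedContinuousFunction.compContinuous_apply] using h2
    rw [heq] at this
    simpa [BoundedContinuousFunction.compContinuous_apply] using this
  have hT2lim : Tendsto T2 atTop (𝓝 (c * c)) := by
    have := hconv ((h.compContinuous (ContinuousMap.fst (α := E) (β := E))) *
      (h.compContinuous (ContinuousMap.snd (α := E) (β := E))))
    have heq : ∫ p, ((h.compContinuous (ContinuousMap.fst (α := E) (β := E))) *
        (h.compContinuous (ContinuousMap.snd (α := E) (β := E)))) p ∂(ν.prod ν) = c * c := by
      have h2 := integral_prod_mul (μ := ν) (ν := ν) (f := fun x => h x) (g := fun y => h y)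
      simpa [BoundedContinuousFunction.compContinuous_apply] using h2
    rw [heq] at this
    simpa [BoundedContinuousFunction.compContinuous_apply] using this
  -- integrability
  have hSint : ∀ n, Integrable (S n) (P n) := fun n =>
    integrable_of_bdd (hSmeas n).aestronglyMeasurable ‖h‖ (hSbdd n)
  have hS2int : ∀ n, Integrable (fun ω => (S n ω)^2) (P n) := fun n =>
    integrable_of_bdd ((hSmeas n).pow_const 2).aestronglyMeasurable (‖h‖^2)
      (fun ω => by rw [abs_pow]; exact pow_le_pow_left₀ (abs_nonneg _) (hSbdd n ω) 2)
  -- second moment of S - c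
  set V : ℕ → ℝ := fun n => T2 n - 2 * c * T1 n + c^2 with hVdef
  have hVeq : ∀ n, ∫ ω, (S n ω - c)^2 ∂(P n) = V n := by
    intro n
    have hexp : (fun ω => (S n ω - c)^2)
        = fun ω => (S n ω)^2 + ((-(2*c)) * S n ω + c^2) := by funext ω; ring
    have hg : Integrable (fun ω => (-(2*c)) * S n ω + c^2) (P n) :=
      ((hSint n).const_mul _).add (integrable_const _)
    rw [hexp, integral_add (hS2int n) hg,
      integral_add ((hSint n).const_mul _) (integrable_const _), integral_const_mul,
      integral_const]
    rw [hVdef]; simp only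
    rw [hES n, hES2 n]
    simp [measure_univ]
    ring
  have hVlim : Tendsto V atTop (𝓝 0) := by
    have : Tendsto V atTop (𝓝 (c*c - 2*c*c + c^2)) := by
      exact ((hT2lim.sub ((hT1lim.const_mul (2*c)))).add tendsto_const_nhds)
    simpa [show c*c - 2*c*c + c^2 = 0 by ring] using this
  -- Chebyshev
  have hbound : ∀ n, P n {ω | ε < |S n ω - c|} ≤ ENNReal.ofReal (V n / ε^2) := by
    intro n
    have hsub : {ω | ε < |S n ω - c|} ⊆ {ω | ε^2 ≤ (S n ω - c)^2} := by
      intro ω hω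
      simp only [Set.mem_setOf_eq] at hω ⊢
      calc ε^2 ≤ |S n ω - c|^2 := pow_le_pow_left₀ hε.le hω.le 2
        _ = (S n ω - c)^2 := sq_abs _
    have hint2 : Integrable (fun ω => (S n ω - c)^2) (P n) :=
      integrable_of_bdd (((hSmeas n).sub_const c).pow_const 2).aestronglyMeasurable
        ((‖h‖ + |c|)^2) (fun ω => by
          rw [abs_pow]
          refine pow_le_pow_left₀ (abs_nonneg _) ?_ 2
          calc |S n ω - c| ≤ |S n ω| + |c| := abs_sub _ _
            _ ≤ ‖h‖ + |c| := add_le_add_left (hSbdd n ω) _)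
    have hmk := mul_meas_ge_le_integral_of_nonneg
      (ae_of_all _ fun ω => sq_nonneg (S n ω - c)) hint2 (ε^2)
    rw [hVeq n] at hmk
    have h1 : (P n {ω | ε < |S n ω - c|}).toReal
        ≤ (P n {ω | ε^2 ≤ (S n ω - c)^2}).toReal :=
      ENNReal.toReal_mono (measure_ne_top _ _) (measure_mono hsub)
    have h2 : (P n {ω | ε^2 ≤ (S n ω - c)^2}).toReal ≤ V n / ε^2 := by
      rw [le_div_iff₀ (by positivity)]
      rw [measureReal_def] at hmk
      linarith [hmk]
    calc P n {ω | ε < |S n ω - c|}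
        = ENNReal.ofReal ((P n {ω | ε < |S n ω - c|}).toReal) :=
          (ENNReal.ofReal_toReal (measure_ne_top _ _)).symm
      _ ≤ ENNReal.ofReal (V n / ε^2) := ENNReal.ofReal_le_ofReal (h1.trans h2)
  have hABS : (fun n => P n {ω | ε <
      |(1 / (n + 1 : ℝ)) * ∑ v : Fin (n + 1), h (F n ω v) - c|})
      = fun n => P n {ω | ε < |S n ω - c|} := rfl
  rw [hABS]
  refine tendsto_of_tendsto_of_tendsto_of_le_of_le tendsto_const_nhds ?_
    (fun n => zero_le) hbound
  have : Tendsto (fun n => V n / ε^2) atTop (𝓝 (0 / ε^2)) := hVlim.div_const _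
  have h2 := ENNReal.tendsto_ofReal (a := 0) (by simpa using this)
  rwa [ENNReal.ofReal_zero] at h2
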